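/- arXiv:math/0406563 — 2 statements merged into one kernel-verified Lean document; each statement's English description precedes it below -/
import Mathlib

section
/- Let (H_t)_{t≥0} be a measurable real-valued stochastic process with E[|H_t|] < ∞ for all t, and for 0 ≤ s < u let H_{s,u} := σ(H_r : r ≤ s) ∨ σ(H_v : v ≥ u) be its past-future σ-fields. If H is a harness, then for every T > 0 the process M^{(T)}_t := H_t − ∫_0^t (H_T − H_u)/(T − u) du, 0 ≤ t < T, is a martingale with respect to the filtration (H_{t,T})_{0≤t<T}; that is, for all 0 ≤ s < t < T one has E[M^{(T)}_t | H_{s,T}] = M^{(T)}_s almost surely. -/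
open MeasureTheory ProbabilityTheory Filter Set

/-- The past-future σ-field `σ(H_r : 0 ≤ r ≤ s) ⊔ σ(H_v : v ≥ u)` of a real-valued
process `H` indexed by nonnegative times. -/
def pastFuture {Ω : Type*} [MeasurableSpace Ω] (H : ℝ → Ω → ℝ) (s u : ℝ) :
    MeasurableSpace Ω :=
  (⨆ r ∈ Set.Icc (0 : ℝ) s, MeasurableSpace.comap (H r) inferInstance) ⊔
    (⨆ v ∈ Set.Ici u, MeasurableSpace.comap (H v) inferInstance)

/-- A measurable integrable process `H` is a harness if for all `0 ≤ s < t < u`,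
`E[H_t | H_{s,u}] = ((u−t) H_s + (t−s) H_u)/(u−s)` almost surely. -/
def IsHarness {Ω : Type*} [MeasurableSpace Ω] (μ : Measure Ω) (H : ℝ → Ω → ℝ) : Prop :=
  ∀ s t u : ℝ, 0 ≤ s → s < t → t < u →
    μ[H t | pastFuture H s u] =ᵐ[μ]
      fun ω => ((u - t) * H s ω + (t - s) * H u ω) / (u - s)

/-- If `H` is a harness, then for every `T > 0` the process
`M^{(T)}_t = H_t − ∫_0^t (H_T − H_u)/(T − u) du`, `0 ≤ t < T`, is a martingale with
respect to the filtration `(H_{t,T})_{0 ≤ t < T}`: for all `0 ≤ s < t < T`,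
`E[M^{(T)}_t | H_{s,T}] = M^{(T)}_s` almost surely. -/
theorem harness_decomposition_martingale
    {Ω : Type*} [MeasurableSpace Ω] (μ : Measure Ω) [IsProbabilityMeasure μ]
    (H : ℝ → Ω → ℝ)
    (hmeas : Measurable fun p : ℝ × Ω => H p.1 p.2)
    (hint : ∀ t : ℝ, 0 ≤ t → Integrable (H t) μ)
    (hH : IsHarness μ H)
    (T : ℝ) (hT : 0 < T)
    (M : ℝ → Ω → ℝ)
    (hM : ∀ t ω, M t ω = H t ω - ∫ u in (0 : ℝ)..t, (H T ω - H u ω) / (T - u))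
    (hintM : ∀ t : ℝ, 0 ≤ t → t < T →
      Integrable (fun ω => ∫ u in (0 : ℝ)..t, (H T ω - H u ω) / (T - u)) μ) :
    ∀ s t : ℝ, 0 ≤ s → s < t → t < T →
      μ[M t | pastFuture H s T] =ᵐ[μ] M s := by
  intro s t hs hst htT
  have ht0 : 0 ≤ t := hs.trans hst.le
  have hsT : s < T := hst.trans htT
  have hTt : (0:ℝ) < T - t := by linarith
  have hTs : T - s ≠ 0 := by intro h; linarith [hsT]
  -- measurability of sections
  have hHm : ∀ r : ℝ, Measurable (H r) := fun r =>
    hmeas.comp (measurable_const.prodMk measurable_id)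
  -- pastFuture is sub-σ-algebra
  have hle : ∀ a b : ℝ, pastFuture H a b ≤ ‹MeasurableSpace Ω› := by
    intro a b
    refine sup_le (iSup₂_le fun r _ => ?_) (iSup₂_le fun v _ => ?_) <;>
      exact measurable_iff_comap_le.mp (hHm _)
  -- G-measurability facts
  have hGpast : ∀ r : ℝ, r ∈ Icc (0:ℝ) s → Measurable[pastFuture H s T] (H r) := by
    intro r hr
    exact measurable_iff_comap_le.mpr
      ((le_iSup₂ (f := fun r (_ : r ∈ Icc (0:ℝ) s) =>
          MeasurableSpace.comap (H r) inferInstance) r hr).trans le_sup_left)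
  have hGT : Measurable[pastFuture H s T] (H T) :=
    measurable_iff_comap_le.mpr
      ((le_iSup₂ (f := fun v (_ : v ∈ Ici T) =>
          MeasurableSpace.comap (H v) inferInstance) T (mem_Ici.mpr le_rfl)).trans le_sup_right)
  -- the integrand
  set F : ℝ → Ω → ℝ := fun u ω => (H T ω - H u ω) / (T - u) with hFdef
  have hFpm : Measurable (fun p : ℝ × Ω => F p.1 p.2) := by
    rw [hFdef]
    exact (((hHm T).comp measurable_snd).sub hmeas).div (measurable_const.sub measurable_fst)
  have hFint : ∀ u : ℝ, 0 ≤ u → Integrable (F u) μ := fun u hu =>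
    ((hint T hT.le).sub (hint u hu)).div_const _
  -- uniform L1 bound on [0, t]
  set m₀ : ℝ := (t + T) / 2 with hm₀def
  have htm₀ : t < m₀ := by rw [hm₀def]; linarith
  have hm₀T : m₀ < T := by rw [hm₀def]; linarith
  have hm₀0 : 0 ≤ m₀ := by linarith
  have hTm₀ : (0:ℝ) < T - m₀ := by linarith
  set C : ℝ := (T * ∫ ω, |H m₀ ω| ∂μ + m₀ * ∫ ω, |H T ω| ∂μ) / (T - m₀) with hCdef
  have hbound : ∀ u : ℝ, 0 ≤ u → u ≤ t → ∫ ω, |H u ω| ∂μ ≤ C := by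
    intro u hu hut
    have hum : u < m₀ := lt_of_le_of_lt hut htm₀
    have hTu : (0:ℝ) < T - u := by linarith
    have heq : H u =ᵐ[μ] fun ω =>
        ((T - u) * (μ[H m₀ | pastFuture H u T]) ω - (m₀ - u) * H T ω) / (T - m₀) := by
      filter_upwards [hH u m₀ T hu hum hm₀T] with ω hω
      rw [hω]
      field_simp
      ring
    have int1 : Integrable (fun ω =>
        ((T - u) * (μ[H m₀ | pastFuture H u T]) ω - (m₀ - u) * H T ω) / (T - m₀)) μ :=
      ((integrable_condExp.const_mul _).sub ((hint T hT.le).const_mul _)).div_const _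
    have int2 : Integrable (fun ω =>
        ((T - u) * |(μ[H m₀ | pastFuture H u T]) ω| + (m₀ - u) * |H T ω|) / (T - m₀)) μ :=
      ((integrable_condExp.abs.const_mul _).add ((hint T hT.le).abs.const_mul _)).div_const _
    calc ∫ ω, |H u ω| ∂μ
        = ∫ ω, |((T - u) * (μ[H m₀ | pastFuture H u T]) ω - (m₀ - u) * H T ω) / (T - m₀)| ∂μ := by
          refine integral_congr_ae ?_
          filter_upwards [heq] with ω h
          rw [h]
      _ ≤ ∫ ω, ((T - u) * |(μ[H m₀ | pastFuture H u T]) ω| + (m₀ - u) * |H T ω|) / (T - m₀) ∂μ := by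
          refine integral_mono_ae int1.abs int2 (ae_of_all _ fun ω => ?_)
          dsimp only
          rw [abs_div, abs_of_pos hTm₀]
          refine (div_le_div_iff_of_pos_right hTm₀).mpr ?_
          calc |(T - u) * (μ[H m₀ | pastFuture H u T]) ω - (m₀ - u) * H T ω|
              ≤ |(T - u) * (μ[H m₀ | pastFuture H u T]) ω| + |(m₀ - u) * H T ω| := by
                rw [sub_eq_add_neg]
                exact (abs_add_le _ _).trans_eq (by rw [abs_neg])
            _ = (T - u) * |(μ[H m₀ | pastFuture H u T]) ω| + (m₀ - u) * |H T ω| := by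
                rw [abs_mul, abs_mul, abs_of_pos hTu, abs_of_pos (by linarith : (0:ℝ) < m₀ - u)]
      _ = ((T - u) * ∫ ω, |(μ[H m₀ | pastFuture H u T]) ω| ∂μ
            + (m₀ - u) * ∫ ω, |H T ω| ∂μ) / (T - m₀) := by
          rw [integral_div, integral_add (integrable_condExp.abs.const_mul _)
            ((hint T hT.le).abs.const_mul _), integral_const_mul, integral_const_mul]
      _ ≤ C := by
          rw [hCdef]
          refine (div_le_div_iff_of_pos_right hTm₀).mpr ?_
          have h1 : ∫ ω, |(μ[H m₀ | pastFuture H u T]) ω| ∂μ ≤ ∫ ω, |H m₀ ω| ∂μ :=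
            integral_abs_condExp_le _
          have h2 : (0:ℝ) ≤ ∫ ω, |(μ[H m₀ | pastFuture H u T]) ω| ∂μ :=
            integral_nonneg fun ω => abs_nonneg _
          have h3 : (0:ℝ) ≤ ∫ ω, |H T ω| ∂μ := integral_nonneg fun ω => abs_nonneg _
          have h4 : (0:ℝ) ≤ ∫ ω, |H m₀ ω| ∂μ := integral_nonneg fun ω => abs_nonneg _
          nlinarith [mul_le_mul_of_nonneg_left h1 (le_of_lt hTu)]
  -- joint integrability on Ioc 0 t × Ω
  have hFprodt : Integrable (fun p : ℝ × Ω => F p.1 p.2)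
      ((volume.restrict (Ioc (0:ℝ) t)).prod μ) := by
    have hmp : AEStronglyMeasurable (fun p : ℝ × Ω => F p.1 p.2)
        ((volume.restrict (Ioc (0:ℝ) t)).prod μ) := hFpm.aestronglyMeasurable
    rw [integrable_prod_iff hmp]
    constructor
    · exact (ae_restrict_iff' measurableSet_Ioc).mpr (ae_of_all _ fun u hu => hFint u hu.1.le)
    · refine Integrable.mono' (integrable_const ((∫ ω, |H T ω| ∂μ + C) / (T - t)))
        hmp.norm.integral_prod_right' ?_
      refine (ae_restrict_iff' measurableSet_Ioc).mpr (ae_of_all _ fun u hu => ?_)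
      have hu0 : 0 ≤ u := hu.1.le
      have hTu : (0:ℝ) < T - u := by have := hu.2; linarith
      rw [Real.norm_eq_abs, abs_of_nonneg (integral_nonneg fun ω => norm_nonneg _)]
      calc ∫ ω, ‖F u ω‖ ∂μ
          ≤ ∫ ω, (|H T ω| + |H u ω|) / (T - t) ∂μ := by
            refine integral_mono_ae (hFint u hu0).norm
              (((hint T hT.le).abs.add (hint u hu0).abs).div_const _) (ae_of_all _ fun ω => ?_)
            show ‖(H T ω - H u ω) / (T - u)‖ ≤ (|H T ω| + |H u ω|) / (T - t)
            rw [Real.norm_eq_abs, abs_div, abs_of_pos hTu]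
            exact div_le_div₀ (by positivity) (abs_sub _ _) hTt (by linarith [hu.2])
          _ = (∫ ω, |H T ω| ∂μ + ∫ ω, |H u ω| ∂μ) / (T - t) := by
            rw [integral_div, integral_add (hint T hT.le).abs (hint u hu0).abs]
          _ ≤ (∫ ω, |H T ω| ∂μ + C) / (T - t) := by
            refine (div_le_div_iff_of_pos_right hTt).mpr ?_
            linarith [hbound u hu0 hu.2]
  have hFsub : ∀ a b : ℝ, 0 ≤ a → b ≤ t → Integrable (fun p : ℝ × Ω => F p.1 p.2)
      ((volume.restrict (Ioc a b)).prod μ) := by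
    intro a b ha hb
    have hsub : Ioc a b ⊆ Ioc 0 t := Ioc_subset_Ioc ha hb
    have h1 : volume.restrict (Ioc a b) = (volume.restrict (Ioc (0:ℝ) t)).restrict (Ioc a b) := by
      rw [Measure.restrict_restrict measurableSet_Ioc, inter_eq_self_of_subset_left hsub]
    have key : ((volume.restrict (Ioc (0:ℝ) t)).prod μ).restrict (Ioc a b ×ˢ univ)
        = (volume.restrict (Ioc a b)).prod μ := by
      rw [← Measure.prod_restrict, ← h1, Measure.restrict_univ]
    rw [← key]
    exact hFprodt.integrableOn
  have hsec : ∀ᵐ ω ∂μ, IntegrableOn (fun u => F u ω) (Ioc 0 t) volume :=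
    hFprodt.prod_left_ae
  -- bounded multiplier integrability
  have hmulb : ∀ g : Ω → ℝ, Integrable g μ → ∀ ψ : Ω → ℝ, Measurable ψ →
      (∀ ω, |ψ ω| ≤ 1) → Integrable (fun ω => g ω * ψ ω) μ := by
    intro g hg ψ hψ hb
    refine Integrable.mono' hg.norm (hg.aestronglyMeasurable.mul hψ.aestronglyMeasurable)
      (ae_of_all _ fun ω => ?_)
    rw [norm_mul]
    have h1 := hb ω
    have h2 : ‖ψ ω‖ = |ψ ω| := Real.norm_eq_abs _
    nlinarith [norm_nonneg (g ω), abs_nonneg (ψ ω)]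
  -- weighted Fubini
  have hswap : ∀ a b : ℝ, 0 ≤ a → b ≤ t → ∀ ψ : Ω → ℝ, Measurable ψ → (∀ ω, |ψ ω| ≤ 1) →
      ∫ ω, (∫ u in Ioc a b, F u ω) * ψ ω ∂μ = ∫ u in Ioc a b, ∫ ω, F u ω * ψ ω ∂μ := by
    intro a b ha hb ψ hψm hψb
    have hint2 : Integrable (fun p : ℝ × Ω => F p.1 p.2 * ψ p.2)
        ((volume.restrict (Ioc a b)).prod μ) := by
      refine Integrable.mono' (hFsub a b ha hb).norm
        ((hFpm.mul (hψm.comp measurable_snd)).aestronglyMeasurable) (ae_of_all _ fun p => ?_)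
      rw [norm_mul]
      have h1 := hψb p.2
      have h2 : ‖ψ p.2‖ = |ψ p.2| := Real.norm_eq_abs _
      nlinarith [norm_nonneg (F p.1 p.2), abs_nonneg (ψ p.2)]
    have hs1 : ∀ ω, (∫ u in Ioc a b, F u ω) * ψ ω = ∫ u in Ioc a b, F u ω * ψ ω := fun ω =>
      (integral_mul_const (ψ ω) fun u => F u ω).symm
    calc ∫ ω, (∫ u in Ioc a b, F u ω) * ψ ω ∂μ
        = ∫ ω, (∫ u in Ioc a b, F u ω * ψ ω) ∂μ := by simp only [hs1]
      _ = ∫ u in Ioc a b, ∫ ω, F u ω * ψ ω ∂μ :=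
          integral_integral_swap (f := fun ω u => F u ω * ψ ω) hint2.swap
  -- indicator as weight
  have hind : ∀ (A : Set Ω), MeasurableSet A → ∀ g : Ω → ℝ,
      ∫ ω, g ω * A.indicator (fun _ => (1:ℝ)) ω ∂μ = ∫ ω in A, g ω ∂μ := by
    intro A hA g
    rw [← integral_indicator hA]
    congr 1
    ext ω
    by_cases h : ω ∈ A <;> simp [h]
  -- harness interpolation on G-sets
  have hinterp : ∀ u : ℝ, s < u → u < T → ∀ A : Set Ω, MeasurableSet[pastFuture H s T] A →
      ∫ ω in A, H u ω ∂μ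
        = ((T - u) * ∫ ω in A, H s ω ∂μ + (u - s) * ∫ ω in A, H T ω ∂μ) / (T - s) := by
    intro u hsu huT A hA
    rw [← setIntegral_condExp (hle s T) (hint u (hs.trans hsu.le)) hA]
    rw [setIntegral_congr_ae (hle s T _ hA) ((hH s u T hs hsu huT).mono fun ω hω _ => hω)]
    rw [integral_div, integral_add (((hint s hs).integrableOn).const_mul _)
      (((hint T hT.le).integrableOn).const_mul _), integral_const_mul, integral_const_mul]
  have key1 : ∀ u : ℝ, s < u → u < T → ∀ A : Set Ω, MeasurableSet[pastFuture H s T] A →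
      ∫ ω in A, F u ω ∂μ
        = (∫ ω in A, H T ω ∂μ - ∫ ω in A, H s ω ∂μ) / (T - s) := by
    intro u hsu huT A hA
    have hTu : T - u ≠ 0 := by intro h; linarith
    have h3 : ∫ ω in A, F u ω ∂μ = (∫ ω in A, H T ω ∂μ - ∫ ω in A, H u ω ∂μ) / (T - u) := by
      rw [hFdef]
      rw [integral_div, integral_sub ((hint T hT.le).integrableOn)
        ((hint u (hs.trans hsu.le)).integrableOn)]
    rw [h3, hinterp u hsu huT A hA]
    field_simp
    ring
  -- the compensator
  set J : ℝ → Ω → ℝ := fun r ω => ∫ u in Ioc (0:ℝ) r, F u ω with hJdef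
  have hMeq : ∀ r : ℝ, 0 ≤ r → M r = fun ω => H r ω - J r ω := by
    intro r hr
    funext ω
    rw [hM r ω, intervalIntegral.integral_of_le hr]
  have hJint : ∀ r : ℝ, 0 ≤ r → r < T → Integrable (J r) μ := by
    intro r h0 hrT
    refine (hintM r h0 hrT).congr (ae_of_all _ fun ω => ?_)
    show (∫ u in (0:ℝ)..r, (H T ω - H u ω) / (T - u)) = J r ω
    rw [intervalIntegral.integral_of_le h0]
  have hJsplit : ∀ᵐ ω ∂μ, J t ω = J s ω + ∫ u in Ioc s t, F u ω := by
    filter_upwards [hsec] with ω hω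
    show (∫ u in Ioc (0:ℝ) t, F u ω) = (∫ u in Ioc (0:ℝ) s, F u ω) + ∫ u in Ioc s t, F u ω
    rw [show Ioc (0:ℝ) t = Ioc 0 s ∪ Ioc s t from (Ioc_union_Ioc_eq_Ioc hs hst.le).symm,
      setIntegral_union (Ioc_disjoint_Ioc_of_le le_rfl) measurableSet_Ioc
        (hω.mono_set (Ioc_subset_Ioc le_rfl hst.le)) (hω.mono_set (Ioc_subset_Ioc hs le_rfl))]
  have hIst_int : Integrable (fun ω => ∫ u in Ioc s t, F u ω) μ := by
    refine ((hJint t ht0 htT).sub (hJint s hs hsT)).congr ?_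
    filter_upwards [hJsplit] with ω h
    simp only [Pi.sub_apply]
    rw [h]; ring
  -- set-integral equality on G-sets
  have hc : ∀ A : Set Ω, MeasurableSet[pastFuture H s T] A →
      ∫ ω in A, M s ω ∂μ = ∫ ω in A, M t ω ∂μ := by
    intro A hA
    have hA' : MeasurableSet A := hle s T _ hA
    have hχm : Measurable (A.indicator fun _ => (1:ℝ)) := measurable_const.indicator hA'
    have hχb : ∀ ω, |A.indicator (fun _ => (1:ℝ)) ω| ≤ 1 := fun ω => by
      by_cases h : ω ∈ A <;> simp [h]
    have hIst : ∫ ω in A, (∫ u in Ioc s t, F u ω) ∂μ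
        = (t - s) * ((∫ ω in A, H T ω ∂μ - ∫ ω in A, H s ω ∂μ) / (T - s)) := by
      rw [← hind A hA' _]
      rw [hswap s t hs le_rfl _ hχm hχb]
      have hcongr : ∀ u ∈ Ioc s t, (fun u => ∫ ω, F u ω * A.indicator (fun _ => (1:ℝ)) ω ∂μ) u
          = (fun _ : ℝ => (∫ ω in A, H T ω ∂μ - ∫ ω in A, H s ω ∂μ) / (T - s)) u := by
        intro u hu
        simp only
        rw [hind A hA' (F u), key1 u hu.1 (lt_of_le_of_lt hu.2 htT) A hA]
      rw [setIntegral_congr_fun measurableSet_Ioc hcongr]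
      rw [setIntegral_const, Real.volume_real_Ioc_of_le hst.le, smul_eq_mul]
    have hHt : ∫ ω in A, H t ω ∂μ
        = ((T - t) * ∫ ω in A, H s ω ∂μ + (t - s) * ∫ ω in A, H T ω ∂μ) / (T - s) :=
      hinterp t hst htT A hA
    have hJtA : ∫ ω in A, J t ω ∂μ
        = ∫ ω in A, J s ω ∂μ + ∫ ω in A, (∫ u in Ioc s t, F u ω) ∂μ := by
      rw [← integral_add ((hJint s hs hsT).integrableOn) (hIst_int.integrableOn)]
      exact setIntegral_congr_ae hA' (hJsplit.mono fun ω h _ => h)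
    simp only [hMeq t ht0, hMeq s hs]
    rw [integral_sub ((hint t ht0).integrableOn) ((hJint t ht0 htT).integrableOn),
      integral_sub ((hint s hs).integrableOn) ((hJint s hs hsT).integrableOn),
      hJtA, hHt, hIst]
    field_simp
    ring
  -- J s is a.e. G-measurable
  have hJsG : J s =ᵐ[μ] μ[J s | pastFuture H s T] := by
    refine Integrable.ae_eq_of_forall_setIntegral_eq _ _ (hJint s hs hsT) integrable_condExp ?_
    intro A hA' _
    have hχm : Measurable (A.indicator fun _ => (1:ℝ)) := measurable_const.indicator hA'
    have hχb : ∀ ω, |A.indicator (fun _ => (1:ℝ)) ω| ≤ 1 := fun ω => by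
      by_cases h : ω ∈ A <;> simp [h]
    have hχint : Integrable (A.indicator fun _ => (1:ℝ)) μ :=
      (integrable_const (1:ℝ)).indicator hA'
    set φ : Ω → ℝ := μ[A.indicator fun _ => (1:ℝ) | pastFuture H s T] with hφdef
    set φ' : Ω → ℝ := fun ω => max (-1) (min 1 (φ ω)) with hφ'def
    have hφGm : Measurable[pastFuture H s T] φ := stronglyMeasurable_condExp.measurable
    have hφ'Gm : Measurable[pastFuture H s T] φ' :=
      Measurable.max measurable_const (Measurable.min measurable_const hφGm)
    have hφ'm : Measurable φ' := hφ'Gm.mono (hle s T) le_rfl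
    have hφ'b : ∀ ω, |φ' ω| ≤ 1 := fun ω =>
      abs_le.mpr ⟨le_max_left _ _, max_le (by norm_num) (min_le_left _ _)⟩
    have hφφ' : φ' =ᵐ[μ] φ := by
      have h0 : (0:Ω → ℝ) ≤ᵐ[μ] φ := by
        refine condExp_nonneg (ae_of_all _ fun ω => ?_)
        by_cases h : ω ∈ A <;> simp [h]
      have h1 : φ ≤ᵐ[μ] fun _ => (1:ℝ) := by
        have := condExp_mono (μ := μ) (m := pastFuture H s T) hχint (integrable_const (1:ℝ))
          (ae_of_all _ fun ω => by by_cases h : ω ∈ A <;> simp [h])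
        rwa [condExp_const (hle s T)] at this
      filter_upwards [h0, h1] with ω hω0 hω1
      simp only [Pi.zero_apply] at hω0
      show max (-1) (min 1 (φ ω)) = φ ω
      rw [min_eq_right hω1]
      exact max_eq_right (by linarith : (-1:ℝ) ≤ φ ω)
    -- LHS
    have hLHS : ∫ ω in A, J s ω ∂μ
        = ∫ u in Ioc (0:ℝ) s, ∫ ω, F u ω * A.indicator (fun _ => (1:ℝ)) ω ∂μ := by
      rw [← hind A hA' (J s)]
      exact hswap 0 s le_rfl hst.le _ hχm hχb
    -- RHS
    have hRHS : ∫ ω in A, (μ[J s | pastFuture H s T]) ω ∂μ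
        = ∫ u in Ioc (0:ℝ) s, ∫ ω, F u ω * A.indicator (fun _ => (1:ℝ)) ω ∂μ := by
      have hYχ : Integrable (fun ω => (μ[J s | pastFuture H s T]) ω
          * A.indicator (fun _ => (1:ℝ)) ω) μ := hmulb _ integrable_condExp _ hχm hχb
      have step1 : ∫ ω in A, (μ[J s | pastFuture H s T]) ω ∂μ
          = ∫ ω, (μ[J s | pastFuture H s T]) ω * A.indicator (fun _ => (1:ℝ)) ω ∂μ :=
        (hind A hA' _).symm
      have hpull1 : μ[(μ[J s | pastFuture H s T]) * (A.indicator fun _ => (1:ℝ))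
            | pastFuture H s T]
          =ᵐ[μ] (μ[J s | pastFuture H s T]) * μ[A.indicator fun _ => (1:ℝ) | pastFuture H s T] :=
        condExp_mul_of_stronglyMeasurable_left stronglyMeasurable_condExp hYχ hχint
      have step2 : ∫ ω, (μ[J s | pastFuture H s T]) ω * A.indicator (fun _ => (1:ℝ)) ω ∂μ
          = ∫ ω, (μ[J s | pastFuture H s T]) ω * φ' ω ∂μ := by
        calc ∫ ω, (μ[J s | pastFuture H s T]) ω * A.indicator (fun _ => (1:ℝ)) ω ∂μ
            = ∫ ω, (μ[(μ[J s | pastFuture H s T]) * (A.indicator fun _ => (1:ℝ))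
                | pastFuture H s T]) ω ∂μ := (integral_condExp (hle s T)).symm
          _ = ∫ ω, ((μ[J s | pastFuture H s T]) * φ) ω ∂μ := integral_congr_ae hpull1
          _ = ∫ ω, (μ[J s | pastFuture H s T]) ω * φ' ω ∂μ := by
              refine integral_congr_ae ?_
              filter_upwards [hφφ'] with ω h
              simp only [Pi.mul_apply]
              rw [h]
      have hφ'Js : Integrable (fun ω => J s ω * φ' ω) μ :=
        hmulb _ (hJint s hs hsT) _ hφ'm hφ'b
      have hpull2 : μ[φ' * J s | pastFuture H s T]
          =ᵐ[μ] φ' * μ[J s | pastFuture H s T] := by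
        refine condExp_mul_of_stronglyMeasurable_left (hφ'Gm.stronglyMeasurable) ?_ (hJint s hs hsT)
        refine hφ'Js.congr (ae_of_all _ fun ω => ?_)
        simp [mul_comm]
      have step3 : ∫ ω, (μ[J s | pastFuture H s T]) ω * φ' ω ∂μ = ∫ ω, J s ω * φ' ω ∂μ := by
        calc ∫ ω, (μ[J s | pastFuture H s T]) ω * φ' ω ∂μ
            = ∫ ω, (φ' * μ[J s | pastFuture H s T]) ω ∂μ := by
              refine integral_congr_ae (ae_of_all _ fun ω => ?_)
              simp [Pi.mul_apply, mul_comm]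
          _ = ∫ ω, (μ[φ' * J s | pastFuture H s T]) ω ∂μ := (integral_congr_ae hpull2).symm
          _ = ∫ ω, (φ' * J s) ω ∂μ := integral_condExp (hle s T)
          _ = ∫ ω, J s ω * φ' ω ∂μ := by
              refine integral_congr_ae (ae_of_all _ fun ω => ?_)
              simp [Pi.mul_apply, mul_comm]
      have step4 : ∫ ω, J s ω * φ' ω ∂μ = ∫ u in Ioc (0:ℝ) s, ∫ ω, F u ω * φ' ω ∂μ :=
        hswap 0 s le_rfl hst.le _ hφ'm hφ'b
      have step5 : ∀ u ∈ Ioc (0:ℝ) s, (fun u => ∫ ω, F u ω * φ' ω ∂μ) u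
          = (fun u => ∫ ω, F u ω * A.indicator (fun _ => (1:ℝ)) ω ∂μ) u := by
        intro u hu
        simp only
        have hFuGm : Measurable[pastFuture H s T] (F u) := by
          rw [hFdef]
          exact (hGT.sub (hGpast u ⟨hu.1.le, hu.2⟩)).div_const _
        have hFuχ : Integrable (fun ω => F u ω * A.indicator (fun _ => (1:ℝ)) ω) μ :=
          hmulb _ (hFint u hu.1.le) _ hχm hχb
        have hpull3 : μ[(F u) * (A.indicator fun _ => (1:ℝ)) | pastFuture H s T]
            =ᵐ[μ] (F u) * μ[A.indicator fun _ => (1:ℝ) | pastFuture H s T] :=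
          condExp_mul_of_stronglyMeasurable_left hFuGm.stronglyMeasurable hFuχ hχint
        calc ∫ ω, F u ω * φ' ω ∂μ
            = ∫ ω, ((F u) * φ) ω ∂μ := by
              refine integral_congr_ae ?_
              filter_upwards [hφφ'] with ω h
              simp only [Pi.mul_apply]
              rw [h]
          _ = ∫ ω, (μ[(F u) * (A.indicator fun _ => (1:ℝ)) | pastFuture H s T]) ω ∂μ :=
              (integral_congr_ae hpull3).symm
          _ = ∫ ω, F u ω * A.indicator (fun _ => (1:ℝ)) ω ∂μ := integral_condExp (hle s T)
      rw [step1, step2, step3, step4, setIntegral_congr_fun measurableSet_Ioc step5]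
    rw [hLHS, hRHS]
  -- conclusion
  have hMs_int : Integrable (M s) μ := by
    rw [hMeq s hs]; exact (hint s hs).sub (hJint s hs hsT)
  have hMt_int : Integrable (M t) μ := by
    rw [hMeq t ht0]; exact (hint t ht0).sub (hJint t ht0 htT)
  have hMsG : AEStronglyMeasurable[pastFuture H s T] (M s) μ := by
    rw [hMeq s hs]
    exact AEStronglyMeasurable.sub
      (((hGpast s ⟨hs, le_rfl⟩).stronglyMeasurable).aestronglyMeasurable)
      (AEStronglyMeasurable.congr stronglyMeasurable_condExp.aestronglyMeasurable hJsG.symm)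
  exact (ae_eq_condExp_of_forall_setIntegral_eq (hle s T) hMt_int
    (fun A _ _ => hMs_int.integrableOn) (fun A hA _ => hc A hA) hMsG).symm
end

section
/- Let σ ≥ 0, let ν be a Borel measure on ℝ∖{0} with ∫ |z| ν(dz) < ∞, let u > 0, and let φ_u : ℝ → ℝ be an integrable probability density which is differentiable with φ'_u integrable and with x ↦ x·φ_u(x) integrable. Suppose that for all λ ∈ ℝ, ∫ e^{iλx} φ_u(x) dx = e^{−uΦ(λ)}, where Φ : ℝ → ℂ is differentiable with Φ'(λ) = σ²λ − i ∫ z e^{iλz} ν(dz). Then for Lebesgue-almost every x ∈ ℝ, −σ² φ'_u(x) + ∫ z φ_u(x − z) ν(dz) = (x/u) φ_u(x). -/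
open MeasureTheory Filter Set

section Aux

open Complex Real
open scoped FourierTransform

/-- A smooth compactly supported function (ℂ-valued) is a Schwartz map. -/
noncomputable def LevyAux.toSchwartz (g : ℝ → ℂ) (hg : ContDiff ℝ (⊤ : ℕ∞) g)
    (hsupp : HasCompactSupport g) : SchwartzMap ℝ ℂ where
  toFun := g
  smooth' := hg
  decay' := by
    intro k n
    have h2 : Continuous fun x => ‖x‖ ^ k * ‖iteratedFDeriv ℝ n g x‖ := by
      apply Continuous.mul (by fun_prop)
      exact (hg.continuous_iteratedFDeriv (mod_cast le_top)).norm
    have h3 : HasCompactSupport fun x => ‖x‖ ^ k * ‖iteratedFDeriv ℝ n g x‖ := by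
      apply HasCompactSupport.mul_left
      exact (hsupp.iteratedFDeriv n).norm
    obtain ⟨C, hC⟩ := h2.bounded_above_of_compact_support h3
    exact ⟨C, fun x => le_trans (le_abs_self _) (hC x)⟩

/-- Injectivity of the Fourier transform on `L¹(ℝ)`. -/
lemma LevyAux.fourier_inj {h : ℝ → ℂ} (hi : Integrable h) (hz : ∀ ξ : ℝ, 𝓕 h ξ = 0) :
    ∀ᵐ x : ℝ, h x = 0 := by
  apply ae_eq_zero_of_integral_contDiff_smul_eq_zero (hi.locallyIntegrable)
  intro g gsmooth gsupp
  have gsm : ContDiff ℝ (⊤ : ℕ∞) (fun x => (g x : ℂ)) :=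
    Complex.ofRealCLM.contDiff.comp gsmooth
  have gsp : HasCompactSupport (fun x => (g x : ℂ)) :=
    gsupp.comp_left (g := Complex.ofReal) Complex.ofReal_zero
  set ψ : SchwartzMap ℝ ℂ := LevyAux.toSchwartz _ gsm gsp with hψ
  set Ψ : SchwartzMap ℝ ℂ := (FourierTransform.fourierCLE ℂ (SchwartzMap ℝ ℂ)).symm ψ with hΨ
  have hFΨ : 𝓕 (⇑Ψ) = ⇑ψ := by
    have := (FourierTransform.fourierCLE ℂ (SchwartzMap ℝ ℂ)).apply_symm_apply ψ
    rw [← this, FourierTransform.fourierCLE_apply, SchwartzMap.fourier_coe]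
  have flipeq : (innerₗ ℝ).flip = innerₗ ℝ := by
    apply LinearMap.ext; intro x; apply LinearMap.ext; intro y
    exact real_inner_comm x y
  have key := VectorFourier.integral_bilin_fourierIntegral_eq_flip
    (ContinuousLinearMap.mul ℂ ℂ) (Real.continuous_fourierChar)
    (by exact continuous_inner) (μ := volume) (ν := volume) (L := innerₗ ℝ)
    Ψ.integrable hi
  rw [flipeq] at key
  have lhs0 : ∫ ξ : ℝ, (ContinuousLinearMap.mul ℂ ℂ)
      (VectorFourier.fourierIntegral 𝐞 volume (innerₗ ℝ) (⇑Ψ) ξ) (h ξ) = 0 := by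
    rw [key]
    have : ∀ x : ℝ, VectorFourier.fourierIntegral 𝐞 volume (innerₗ ℝ) h x = 0 := hz
    simp [this]
  have heq : ∫ x : ℝ, g x • h x = ∫ ξ : ℝ, (ContinuousLinearMap.mul ℂ ℂ)
      (VectorFourier.fourierIntegral 𝐞 volume (innerₗ ℝ) (⇑Ψ) ξ) (h ξ) := by
    congr 1
    ext x
    rw [ContinuousLinearMap.mul_apply']
    have h1 : VectorFourier.fourierIntegral 𝐞 volume (innerₗ ℝ) (⇑Ψ) x = 𝓕 (⇑Ψ) x := rfl
    rw [h1, hFΨ]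
    show g x • h x = (g x : ℂ) * h x
    rw [Complex.real_smul]
  rw [heq, lhs0]

lemma LevyAux.sigmaFinite (ν : Measure ℝ) (hν_zero : ν {0} = 0)
    (hν_int : Integrable (fun z : ℝ => z) ν) : SigmaFinite ν := by
  have hmeas : ∫⁻ z, ‖z‖₊ ∂ν < ⊤ := hν_int.2
  have hfin : ∀ n : ℕ, ν {z : ℝ | (1 : ℝ) / (n + 1) ≤ |z|} < ⊤ := by
    intro n
    have hε0 : (0:ℝ) < 1 / (n + 1) := by positivity
    have hsub : {z : ℝ | (1:ℝ)/(n+1) ≤ |z|} ⊆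
        {z : ℝ | ENNReal.ofReal ((1:ℝ)/(n+1)) ≤ (‖z‖₊ : ENNReal)} := by
      intro z hz
      simp only [Set.mem_setOf_eq] at hz ⊢
      rw [← enorm_eq_nnnorm, Real.enorm_eq_ofReal_abs]
      exact ENNReal.ofReal_le_ofReal hz
    refine lt_of_le_of_lt (measure_mono hsub) ?_
    refine lt_of_le_of_lt (meas_ge_le_lintegral_div (by fun_prop)
      (by simp [ENNReal.ofReal_eq_zero]; positivity) ENNReal.ofReal_ne_top) ?_
    exact ENNReal.div_lt_top hmeas.ne (by simp [ENNReal.ofReal_eq_zero]; positivity)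
  refine ⟨⟨⟨fun n => {0} ∪ {z : ℝ | (1:ℝ)/(n+1) ≤ |z|}, fun _ => trivial, ?_, ?_⟩⟩⟩
  · intro n
    apply lt_of_le_of_lt (measure_union_le _ _)
    rw [hν_zero]
    simpa using hfin n
  · apply Set.eq_univ_of_forall
    intro z
    rcases eq_or_ne z 0 with rfl | hz
    · exact Set.mem_iUnion.mpr ⟨0, Or.inl rfl⟩
    · obtain ⟨n, hn⟩ := exists_nat_gt (1 / |z|)
      refine Set.mem_iUnion.mpr ⟨n, Or.inr ?_⟩
      simp only [Set.mem_setOf_eq]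
      have h1 : (0:ℝ) < |z| := abs_pos.mpr hz
      rw [div_le_iff₀ (by positivity)]
      have h2 : 1 / |z| < n + 1 := hn.trans (by linarith)
      calc (1:ℝ) = (1/|z|) * |z| := by field_simp
      _ ≤ (n+1) * |z| := by nlinarith
      _ = |z| * (n+1) := mul_comm _ _

lemma LevyAux.prod_lintegral_lt_top (ν : Measure ℝ) [SigmaFinite ν]
    (hν_int : Integrable (fun z : ℝ => z) ν)
    (φu : ℝ → ℝ) (hφ_int : Integrable φu) (hφc : Continuous φu) :
    ∫⁻ p : ℝ × ℝ, ‖p.2 * φu (p.1 - p.2)‖₊ ∂((volume : Measure ℝ).prod ν) < ⊤ := by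
  rw [lintegral_prod_symm _ (by fun_prop)]
  have hinner : ∀ z : ℝ, ∫⁻ x : ℝ, ‖z * φu (x - z)‖₊ = ‖z‖₊ * ∫⁻ x : ℝ, ‖φu x‖₊ := by
    intro z
    have h1 : ∀ x : ℝ, (‖z * φu (x - z)‖₊ : ENNReal) = ‖z‖₊ * ‖φu (x - z)‖₊ := by
      intro x; rw [nnnorm_mul]; push_cast; ring
    simp_rw [h1]
    rw [lintegral_const_mul _ (by fun_prop)]
    congr 1
    have := lintegral_add_right_eq_self (μ := (volume : Measure ℝ))
      (fun x : ℝ => (‖φu x‖₊ : ENNReal)) (-z)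
    simp_rw [← sub_eq_add_neg] at this
    exact this
  calc ∫⁻ z : ℝ, ∫⁻ x : ℝ, ‖z * φu (x - z)‖₊ ∂(volume : Measure ℝ) ∂ν
      = ∫⁻ z : ℝ, (‖z‖₊ * ∫⁻ x : ℝ, ‖φu x‖₊) ∂ν := by
        apply lintegral_congr; intro z; exact hinner z
    _ = (∫⁻ z : ℝ, ‖z‖₊ ∂ν) * ∫⁻ x : ℝ, ‖φu x‖₊ := by
        rw [lintegral_mul_const' _ _ (by exact hφ_int.2.ne)]
    _ < ⊤ := ENNReal.mul_lt_top hν_int.2 hφ_int.2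

/-- Expression of the Fourier integral through the kernel `exp (I l x)`. -/
lemma LevyAux.fourier_at (f : ℝ → ℂ) (l : ℝ) :
    𝓕 f (-l / (2 * π)) = ∫ x : ℝ, Complex.exp (Complex.I * l * x) * f x := by
  rw [Real.fourier_real_eq_integral_exp_smul]
  congr 1
  ext x
  rw [smul_eq_mul]
  congr 1
  have : -2 * π * x * (-l / (2 * π)) = l * x := by
    field_simp
  rw [this]
  push_cast
  ring

lemma LevyAux.fourier_const_mul (c : ℂ) (f : ℝ → ℂ) (w : ℝ) :
    𝓕 (fun x => c * f x) w = c * 𝓕 f w := by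
  rw [Real.fourier_real_eq, Real.fourier_real_eq, ← integral_const_mul]
  congr 1
  ext v
  rw [mul_smul_comm]

lemma LevyAux.char_mul_integrable {μ : Measure ℝ} {f : ℝ → ℂ} (hf : Integrable f μ) (l : ℝ) :
    Integrable (fun x : ℝ => Complex.exp (Complex.I * l * x) * f x) μ := by
  apply hf.bdd_mul (c := 1)
  · apply Continuous.aestronglyMeasurable
    fun_prop
  · refine Filter.Eventually.of_forall fun x => ?_
    rw [Complex.norm_exp]
    simp

end Aux

open scoped FourierTransform

/-- The key Fourier identity for the marginal density of an integrable Lévy process with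
local characteristics `(σ², ν)`: if `φ_u` is a differentiable probability density with
`∫ e^{iλx} φ_u(x) dx = e^{−uΦ(λ)}` where `Φ'(λ) = σ²λ − i∫ z e^{iλz} ν(dz)`, then for
Lebesgue-a.e. `x`, `−σ² φ'_u(x) + ∫ z φ_u(x − z) ν(dz) = (x/u) φ_u(x)`. -/
theorem levy_density_identity
    (σ : ℝ) (hσ : 0 ≤ σ)
    (ν : Measure ℝ) (hν_zero : ν {0} = 0)
    (hν_int : Integrable (fun z : ℝ => z) ν)
    (u : ℝ) (hu : 0 < u)
    (φu φu' : ℝ → ℝ)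
    (hφ_int : Integrable φu)
    (hφ_nonneg : ∀ x : ℝ, 0 ≤ φu x)
    (hφ_one : ∫ x : ℝ, φu x = 1)
    (hφ_deriv : ∀ x : ℝ, HasDerivAt φu (φu' x) x)
    (hφ'_int : Integrable φu')
    (hxφ_int : Integrable fun x : ℝ => x * φu x)
    (Φ Φ' : ℝ → ℂ)
    (hΦ_deriv : ∀ l : ℝ, HasDerivAt Φ (Φ' l) l)
    (hΦ' : ∀ l : ℝ,
      Φ' l = (↑(σ ^ 2 * l) : ℂ) -
        Complex.I * ∫ z : ℝ, Complex.exp (Complex.I * l * z) * (z : ℂ) ∂ν)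
    (hfourier : ∀ l : ℝ,
      ∫ x : ℝ, Complex.exp (Complex.I * l * x) * (φu x : ℂ) =
        Complex.exp (-(u : ℂ) * Φ l)) :
    ∀ᵐ x : ℝ,
      -σ ^ 2 * φu' x + ∫ z : ℝ, z * φu (x - z) ∂ν = (x / u) * φu x := by
  have hν_sf : SigmaFinite ν := LevyAux.sigmaFinite ν hν_zero hν_int
  have hφ_diff : Differentiable ℝ φu := fun x => (hφ_deriv x).differentiableAt
  have hφc : Continuous φu := hφ_diff.continuous
  have hψ_int : Integrable (fun x : ℝ => (φu x : ℂ)) := hφ_int.ofReal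
  have hψ'_int : Integrable (fun x : ℝ => (φu' x : ℂ)) := hφ'_int.ofReal
  have hxψ_int : Integrable (fun x : ℝ => (x : ℂ) * (φu x : ℂ)) := by
    apply (hxφ_int.ofReal).congr
    filter_upwards with x
    exact Complex.ofReal_mul x (φu x)
  have hu0 : (u : ℂ) ≠ 0 := by exact_mod_cast hu.ne'
  have hπ0 : (2 * Real.pi : ℝ) ≠ 0 := by
    simp [Real.pi_ne_zero]
  -- integrability of the convolution term
  have hk_int : Integrable (fun p : ℝ × ℝ => p.2 * φu (p.1 - p.2))
      ((volume : Measure ℝ).prod ν) := by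
    refine ⟨?_, ?_⟩
    · exact (measurable_snd.mul
        (hφc.measurable.comp (measurable_fst.sub measurable_snd))).aestronglyMeasurable
    · exact LevyAux.prod_lintegral_lt_top ν hν_int φu hφ_int hφc
  have hconv_int : Integrable (fun x : ℝ => ∫ z, z * φu (x - z) ∂ν) :=
    hk_int.integral_prod_left
  have hw : ∀ l : ℝ, -2 * Real.pi * (-l / (2 * Real.pi)) = l := by
    intro l; field_simp
  -- value of the Fourier transform
  have hF : ∀ l : ℝ, 𝓕 (fun x : ℝ => (φu x : ℂ)) (-l / (2 * Real.pi)) =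
      Complex.exp (-(u : ℂ) * Φ l) := by
    intro l
    rw [LevyAux.fourier_at]
    simpa using hfourier l
  have hF2 : ∀ w : ℝ, 𝓕 (fun x : ℝ => (φu x : ℂ)) w =
      Complex.exp (-(u : ℂ) * Φ (-2 * Real.pi * w)) := by
    intro w
    have h0 := hF (-2 * Real.pi * w)
    have hww : -(-2 * Real.pi * w) / (2 * Real.pi) = w := by field_simp
    rwa [hww] at h0
  -- (a) Fourier transform of the derivative
  have hdψ : deriv (fun x : ℝ => (φu x : ℂ)) = fun x : ℝ => (φu' x : ℂ) :=
    funext fun x => ((hφ_deriv x).ofReal_comp).deriv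
  have hdiffψ : Differentiable ℝ (fun x : ℝ => (φu x : ℂ)) :=
    fun x => ((hφ_deriv x).ofReal_comp).differentiableAt
  have ha_eq : ∀ l : ℝ, (∫ x : ℝ, Complex.exp (Complex.I * l * x) * (φu' x : ℂ)) =
      -Complex.I * l * Complex.exp (-(u : ℂ) * Φ l) := by
    intro l
    have h1 := Real.fourier_deriv hψ_int hdiffψ (by rw [hdψ]; exact hψ'_int)
    have h2 : 𝓕 (fun x : ℝ => (φu' x : ℂ)) (-l / (2 * Real.pi)) =
        (2 * Real.pi * Complex.I * ((-l / (2 * Real.pi) : ℝ) : ℂ)) •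
          𝓕 (fun x : ℝ => (φu x : ℂ)) (-l / (2 * Real.pi)) := by
      rw [← hdψ]
      exact congrFun h1 _
    rw [LevyAux.fourier_at] at h2
    rw [h2, hF l, smul_eq_mul]
    have hπC : (Real.pi : ℂ) ≠ 0 := by exact_mod_cast Real.pi_ne_zero
    push_cast
    field_simp
  -- (b) Fourier transform of x * φu x
  have hb_eq : ∀ l : ℝ, (∫ x : ℝ, Complex.exp (Complex.I * l * x) * ((x : ℂ) * (φu x : ℂ))) =
      Complex.I * u * Φ' l * Complex.exp (-(u : ℂ) * Φ l) := by
    intro l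
    have hxψs : Integrable (fun x : ℝ => x • ((φu x : ℂ))) := by
      apply hxψ_int.congr
      filter_upwards with x
      rw [Complex.real_smul]
    have hd1 : HasDerivAt (𝓕 (fun x : ℝ => (φu x : ℂ)))
        (𝓕 (fun x : ℝ => (-2 * Real.pi * Complex.I * x) • ((φu x : ℂ)))
          (-l / (2 * Real.pi))) (-l / (2 * Real.pi)) :=
      Real.hasDerivAt_fourier hψ_int hxψs _
    have hFeq : 𝓕 (fun x : ℝ => (φu x : ℂ)) =
        fun w : ℝ => Complex.exp (-(u : ℂ) * Φ (-2 * Real.pi * w)) := funext hF2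
    rw [hFeq] at hd1
    have h0 : HasDerivAt (fun w : ℝ => -2 * Real.pi * w) (-2 * Real.pi) (-l / (2 * Real.pi)) := by
      simpa using (hasDerivAt_id (-l / (2 * Real.pi))).const_mul (-2 * Real.pi)
    have h1 : HasDerivAt (fun w : ℝ => Φ (-2 * Real.pi * w))
        ((Φ' (-2 * Real.pi * (-l / (2 * Real.pi)))) * (-2 * Real.pi)) (-l / (2 * Real.pi)) := by
      have hc := (hΦ_deriv (-2 * Real.pi * (-l / (2 * Real.pi)))).scomp
        (-l / (2 * Real.pi)) h0
      refine hc.congr_deriv ?_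
      rw [Complex.real_smul]
      push_cast
      ring
    have h2 : HasDerivAt (fun w : ℝ => Complex.exp (-(u : ℂ) * Φ (-2 * Real.pi * w)))
        (Complex.exp (-(u : ℂ) * Φ (-2 * Real.pi * (-l / (2 * Real.pi)))) *
          (-(u : ℂ) * ((Φ' (-2 * Real.pi * (-l / (2 * Real.pi)))) * (-2 * Real.pi))))
        (-l / (2 * Real.pi)) := by
      exact (h1.const_mul (-(u : ℂ))).cexp
    have huniq := hd1.unique h2
    have hsmul : (fun x : ℝ => (-2 * Real.pi * Complex.I * x) • ((φu x : ℂ))) =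
        fun x : ℝ => (-2 * Real.pi * Complex.I : ℂ) * ((x : ℂ) * (φu x : ℂ)) := by
      funext x
      rw [smul_eq_mul]
      push_cast
      ring
    rw [hsmul, LevyAux.fourier_const_mul, LevyAux.fourier_at, hw l] at huniq
    have h2πI : (-2 * Real.pi * Complex.I : ℂ) ≠ 0 := by
      simp [Real.pi_ne_zero, Complex.I_ne_zero]
    apply mul_left_cancel₀ h2πI
    rw [huniq]
    push_cast
    linear_combination (2 * (Real.pi : ℂ) * u * Φ' l *
      Complex.exp (-(u : ℂ) * Φ l)) * Complex.I_mul_I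
  -- (c) Fourier transform of the convolution
  have hc_eq : ∀ l : ℝ, (∫ x : ℝ, Complex.exp (Complex.I * l * x) *
        (((∫ z : ℝ, z * φu (x - z) ∂ν : ℝ)) : ℂ)) =
      (∫ z : ℝ, Complex.exp (Complex.I * l * z) * (z : ℂ) ∂ν) *
        Complex.exp (-(u : ℂ) * Φ l) := by
    intro l
    have hH_int : Integrable (Function.uncurry fun x z : ℝ =>
        Complex.exp (Complex.I * l * x) * ((z : ℂ) * (φu (x - z) : ℂ)))
        ((volume : Measure ℝ).prod ν) := by
      constructor
      · have hcont : Continuous fun p : ℝ × ℝ =>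
            Complex.exp (Complex.I * l * p.1) * ((p.2 : ℂ) * (φu (p.1 - p.2) : ℂ)) := by
          apply Continuous.mul
          · exact Complex.continuous_exp.comp (by fun_prop)
          · exact (Complex.continuous_ofReal.comp continuous_snd).mul
              (Complex.continuous_ofReal.comp (hφc.comp (continuous_fst.sub continuous_snd)))
        exact hcont.aestronglyMeasurable
      · have hnn : ∀ p : ℝ × ℝ, (‖Function.uncurry (fun x z : ℝ =>
            Complex.exp (Complex.I * l * x) * ((z : ℂ) * (φu (x - z) : ℂ))) p‖₊ : ENNReal) =
            (‖p.2 * φu (p.1 - p.2)‖₊ : ENNReal) := by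
          intro p
          congr 1
          apply NNReal.eq
          simp [Function.uncurry, Complex.norm_exp]
        exact lt_of_le_of_lt (le_of_eq (lintegral_congr hnn))
          (LevyAux.prod_lintegral_lt_top ν hν_int φu hφ_int hφc)
    calc (∫ x : ℝ, Complex.exp (Complex.I * l * x) *
          (((∫ z : ℝ, z * φu (x - z) ∂ν : ℝ)) : ℂ))
        = ∫ x : ℝ, ∫ z : ℝ, Complex.exp (Complex.I * l * x) *
            ((z : ℂ) * (φu (x - z) : ℂ)) ∂ν := by
          congr 1
          funext x
          rw [integral_const_mul]
          congr 1
          calc ((∫ z : ℝ, z * φu (x - z) ∂ν : ℝ) : ℂ)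
              = ∫ z : ℝ, ((z * φu (x - z) : ℝ) : ℂ) ∂ν := integral_ofReal.symm
            _ = ∫ z : ℝ, (z : ℂ) * (φu (x - z) : ℂ) ∂ν := by
                refine integral_congr_ae (Filter.Eventually.of_forall fun z => ?_)
                push_cast
                ring
      _ = ∫ z : ℝ, (∫ x : ℝ, Complex.exp (Complex.I * l * x) *
            ((z : ℂ) * (φu (x - z) : ℂ))) ∂ν := integral_integral_swap hH_int
      _ = ∫ z : ℝ, (Complex.exp (Complex.I * l * z) * (z : ℂ) *
            Complex.exp (-(u : ℂ) * Φ l)) ∂ν := by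
          refine integral_congr_ae (Filter.Eventually.of_forall fun z => ?_)
          beta_reduce
          have hpull : (∫ x : ℝ, Complex.exp (Complex.I * l * x) *
              ((z : ℂ) * (φu (x - z) : ℂ))) =
              (z : ℂ) * ∫ x : ℝ, Complex.exp (Complex.I * l * x) * (φu (x - z) : ℂ) := by
            rw [← integral_const_mul]
            congr 1
            funext x
            ring
          have hshift : (∫ x : ℝ, Complex.exp (Complex.I * l * x) * (φu (x - z) : ℂ)) =
              Complex.exp (Complex.I * l * z) *
                ∫ x : ℝ, Complex.exp (Complex.I * l * x) * (φu x : ℂ) := by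
            have h0 := integral_add_right_eq_self (μ := (volume : Measure ℝ))
              (fun x : ℝ => Complex.exp (Complex.I * l * x) * (φu (x - z) : ℂ)) z
            rw [← h0, ← integral_const_mul]
            congr 1
            funext x
            rw [add_sub_cancel_right]
            have hsplit : Complex.I * l * ((x + z : ℝ) : ℂ) =
                Complex.I * l * x + Complex.I * l * z := by
              push_cast
              ring
            rw [hsplit, Complex.exp_add]
            ring
          rw [hpull, hshift, hfourier l]
          ring
      _ = (∫ z : ℝ, Complex.exp (Complex.I * l * z) * (z : ℂ) ∂ν) *
            Complex.exp (-(u : ℂ) * Φ l) := by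
          rw [← integral_mul_const]
  -- the combined function has vanishing Fourier transform
  have hmain : ∀ l : ℝ, (∫ x : ℝ, Complex.exp (Complex.I * l * x) *
      (((-σ ^ 2 * φu' x + (∫ z : ℝ, z * φu (x - z) ∂ν) - (x / u) * φu x : ℝ)) : ℂ)) = 0 := by
    intro l
    have i1 : Integrable (fun x : ℝ => Complex.exp (Complex.I * l * x) * (φu' x : ℂ)) :=
      LevyAux.char_mul_integrable hψ'_int l
    have i2 : Integrable (fun x : ℝ => Complex.exp (Complex.I * l * x) *
        (((∫ z : ℝ, z * φu (x - z) ∂ν : ℝ)) : ℂ)) :=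
      LevyAux.char_mul_integrable hconv_int.ofReal l
    have i3 : Integrable (fun x : ℝ => Complex.exp (Complex.I * l * x) *
        ((x : ℂ) * (φu x : ℂ))) :=
      LevyAux.char_mul_integrable hxψ_int l
    have hfun : (fun x : ℝ => Complex.exp (Complex.I * l * x) *
        (((-σ ^ 2 * φu' x + (∫ z : ℝ, z * φu (x - z) ∂ν) - (x / u) * φu x : ℝ)) : ℂ)) =
        fun x : ℝ => ((-σ ^ 2 : ℂ) * (Complex.exp (Complex.I * l * x) * (φu' x : ℂ)) +
          Complex.exp (Complex.I * l * x) * (((∫ z : ℝ, z * φu (x - z) ∂ν : ℝ)) : ℂ)) -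
          ((u : ℂ))⁻¹ * (Complex.exp (Complex.I * l * x) * ((x : ℂ) * (φu x : ℂ))) := by
      funext x
      push_cast
      field_simp
    have iA : Integrable (fun x : ℝ => (-σ ^ 2 : ℂ) *
        (Complex.exp (Complex.I * l * x) * (φu' x : ℂ)) +
        Complex.exp (Complex.I * l * x) * (((∫ z : ℝ, z * φu (x - z) ∂ν : ℝ)) : ℂ)) :=
      (i1.const_mul _).add i2
    have iC : Integrable (fun x : ℝ => ((u : ℂ))⁻¹ *
        (Complex.exp (Complex.I * l * x) * ((x : ℂ) * (φu x : ℂ)))) := i3.const_mul _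
    rw [hfun, integral_sub iA iC, integral_add (i1.const_mul _) i2,
      integral_const_mul, integral_const_mul,
      ha_eq l, hc_eq l, hb_eq l, hΦ' l]
    have hcancel : ((u : ℂ))⁻¹ * (Complex.I * u *
        ((↑(σ ^ 2 * l) : ℂ) - Complex.I * ∫ z : ℝ, Complex.exp (Complex.I * l * z) * (z : ℂ) ∂ν) *
        Complex.exp (-(u : ℂ) * Φ l)) =
        Complex.I * ((↑(σ ^ 2 * l) : ℂ) -
          Complex.I * ∫ z : ℝ, Complex.exp (Complex.I * l * z) * (z : ℂ) ∂ν) *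
        Complex.exp (-(u : ℂ) * Φ l) := by
      field_simp
    rw [hcancel]
    push_cast
    linear_combination ((∫ z : ℝ, Complex.exp (Complex.I * l * z) * (z : ℂ) ∂ν) *
      Complex.exp (-(u : ℂ) * Φ l)) * Complex.I_mul_I
  -- integrability of the combined function
  have h_int : Integrable (fun x : ℝ =>
      -σ ^ 2 * φu' x + (∫ z : ℝ, z * φu (x - z) ∂ν) - (x / u) * φu x) := by
    apply Integrable.sub
    · exact (hφ'_int.const_mul _).add hconv_int
    · have heq : (fun x : ℝ => (x / u) * φu x) = fun x : ℝ => u⁻¹ * (x * φu x) := by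
        funext x
        field_simp
      rw [heq]
      exact hxφ_int.const_mul _
  have hzero : ∀ ξ : ℝ, 𝓕 (fun x : ℝ =>
      (((-σ ^ 2 * φu' x + (∫ z : ℝ, z * φu (x - z) ∂ν) - (x / u) * φu x : ℝ)) : ℂ)) ξ = 0 := by
    intro ξ
    have hξ : ξ = -(-2 * Real.pi * ξ) / (2 * Real.pi) := by field_simp
    rw [hξ, LevyAux.fourier_at]
    exact hmain _
  have hae := LevyAux.fourier_inj h_int.ofReal hzero
  filter_upwards [hae] with x hx
  have hx' : (-σ ^ 2 * φu' x + (∫ z : ℝ, z * φu (x - z) ∂ν) - (x / u) * φu x : ℝ) = 0 :=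
    Complex.ofReal_eq_zero.mp hx
  linarith
end
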